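/- Let P_1,…,P_s ∈ ℤ[x_1,…,x_r] (s ≥ 2, r ≥ 1) be nonzero polynomials, let ℓ = max(deg P_1,…,deg P_s) (total degrees), let S be a nonempty finite subset of ℤ, and let k > 0 be an integer. If #{n ∈ S^r : d_n ≤ k}/(#S)^r > (2k+1)·ℓ/#S, then P_1,…,P_s are coprime polynomials. -/

import Mathlib

open MvPolynomial

namespace Stmt7Aux

noncomputable section

variable {σ : Type*} {R : Type*} [CommRing R]

/-- substitute `x i ↦ (X i) * t`. -/
def toHomPoly : MvPolynomial σ R →+* Polynomial (MvPolynomial σ R) :=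
  eval₂Hom (Polynomial.C.comp C) fun i => Polynomial.C (X i) * Polynomial.X

lemma toHomPoly_monomial (m : σ →₀ ℕ) (c : R) :
    toHomPoly (monomial m c) =
      Polynomial.monomial (m.sum fun _ e => e) (monomial m c) := by
  classical
  rw [toHomPoly, coe_eval₂Hom, eval₂_monomial]
  have h1 : (m.prod fun i e => (Polynomial.C (X i : MvPolynomial σ R) * Polynomial.X) ^ e)
      = Polynomial.C (m.prod fun i e => (X i : MvPolynomial σ R) ^ e) *
        Polynomial.X ^ (m.sum fun _ e => e) := by
    rw [Finsupp.prod, Finsupp.prod, Finsupp.sum]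
    simp only [mul_pow]
    rw [Finset.prod_mul_distrib, Finset.prod_pow_eq_pow_sum, map_prod]
    simp [map_pow]
  rw [h1, RingHom.comp_apply, ← mul_assoc, ← map_mul, ← monomial_eq,
    Polynomial.C_mul_X_pow_eq_monomial]

lemma coeff_toHomPoly (n : ℕ) (p : MvPolynomial σ R) :
    (toHomPoly p).coeff n = homogeneousComponent n p := by
  classical
  induction p using MvPolynomial.induction_on' with
  | add p q hp hq => simp [map_add, hp, hq]
  | monomial m c =>
    rw [toHomPoly_monomial, Polynomial.coeff_monomial]
    ext μ
    rw [coeff_homogeneousComponent, coeff_monomial]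
    have hms : (m.sum fun _ e => e) = m.degree := rfl
    split_ifs with h1 h2 h3 h3 h2 <;>
      (try rfl) <;>
      (try simp_all [coeff_monomial, Finsupp.degree]) <;>
      (intro h; subst h; simp_all [Finsupp.degree])

lemma toHomPoly_ne_zero {p : MvPolynomial σ R} (hp : p ≠ 0) : toHomPoly p ≠ 0 := by
  classical
  obtain ⟨m, hm, hsup⟩ := p.support.exists_mem_eq_sup
    (Finset.nonempty_iff_ne_empty.mpr (mt support_eq_empty.mp hp)) (fun m : σ →₀ ℕ => m.sum fun _ e => e)
  intro h
  have h2 : (toHomPoly p).coeff p.totalDegree = 0 := by rw [h]; simp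
  rw [coeff_toHomPoly] at h2
  have h3 : coeff m (homogeneousComponent p.totalDegree p) = coeff m p := by
    rw [coeff_homogeneousComponent, if_pos]
    show (m.sum fun _ e => e) = _
    rw [totalDegree, ← hsup]
  rw [h2] at h3
  exact (mem_support_iff.mp hm) h3.symm

lemma natDegree_toHomPoly {p : MvPolynomial σ R} (hp : p ≠ 0) :
    (toHomPoly p).natDegree = p.totalDegree := by
  classical
  apply le_antisymm
  · apply Polynomial.natDegree_le_iff_coeff_eq_zero.mpr
    intro N hN
    rw [coeff_toHomPoly]
    exact homogeneousComponent_eq_zero _ _ hN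
  · apply Polynomial.le_natDegree_of_ne_zero
    rw [coeff_toHomPoly]
    obtain ⟨m, hm, hsup⟩ := p.support.exists_mem_eq_sup
      (Finset.nonempty_iff_ne_empty.mpr (mt support_eq_empty.mp hp)) (fun m : σ →₀ ℕ => m.sum fun _ e => e)
    intro h
    have h3 : coeff m (homogeneousComponent p.totalDegree p) = coeff m p := by
      rw [coeff_homogeneousComponent, if_pos]
      show (m.sum fun _ e => e) = _
      rw [totalDegree, ← hsup]
    rw [h] at h3
    exact (mem_support_iff.mp hm) h3.symm

lemma totalDegree_mul_eq [IsDomain R] {p q : MvPolynomial σ R} (hp : p ≠ 0) (hq : q ≠ 0) :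
    (p * q).totalDegree = p.totalDegree + q.totalDegree := by
  rw [← natDegree_toHomPoly (mul_ne_zero hp hq), ← natDegree_toHomPoly hp,
    ← natDegree_toHomPoly hq, map_mul]
  exact Polynomial.natDegree_mul (toHomPoly_ne_zero hp) (toHomPoly_ne_zero hq)

lemma totalDegree_le_of_dvd [IsDomain R] {p q : MvPolynomial σ R} (h : p ∣ q) (hq : q ≠ 0) :
    p.totalDegree ≤ q.totalDegree := by
  obtain ⟨c, rfl⟩ := h
  have hp : p ≠ 0 := left_ne_zero_of_mul hq
  have hc : c ≠ 0 := right_ne_zero_of_mul hq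
  rw [totalDegree_mul_eq hp hc]
  omega

end


lemma sz : ∀ (r : ℕ) (p : MvPolynomial (Fin r) ℤ), p ≠ 0 → ∀ S : Finset ℤ,
    ((Fintype.piFinset fun _ : Fin r => S).filter fun n => eval n p = 0).card * S.card
      ≤ p.totalDegree * S.card ^ r := by
  intro r
  induction r with
  | zero =>
    intro p hp S
    have he : ((Fintype.piFinset fun _ : Fin 0 => S).filter fun n => eval n p = 0) = ∅ := by
      apply Finset.filter_false_of_mem
      intro n _
      rw [eq_C_of_isEmpty p, eval_C]
      intro h
      exact hp (by rw [eq_C_of_isEmpty p, h, map_zero])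
    rw [he]
    simp
  | succ r ih =>
    intro p hp S
    classical
    set F := finSuccEquiv ℤ r p with hFdef
    have hF0 : F ≠ 0 := by
      intro h
      exact hp ((map_eq_zero_iff _ (AlgEquiv.injective _)).mp h)
    set d := F.natDegree with hd
    set lc := F.leadingCoeff with hlcdef
    have hlc : lc ≠ 0 := Polynomial.leadingCoeff_ne_zero.mpr hF0
    have hdeg : lc.totalDegree + d ≤ p.totalDegree := by
      apply totalDegree_coeff_finSuccEquiv_add_le p d
      rwa [← Polynomial.leadingCoeff]
    set A := Fintype.piFinset fun _ : Fin r => S with hA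
    set B := Fintype.piFinset fun _ : Fin (r + 1) => S with hB
    set bad := B.filter fun n => eval n p = 0 with hbad
    have hcard : bad.card ≤
        ∑ n' ∈ A, (S.filter fun y => (F.map (eval n')).eval y = 0).card := by
      rw [← Finset.card_sigma]
      apply Finset.card_le_card_of_injOn (fun n => ⟨Fin.tail n, n 0⟩)
      · intro n hn
        rw [hbad, Finset.mem_coe, Finset.mem_filter, hB, Fintype.mem_piFinset] at hn
        refine Finset.mem_sigma.mpr ⟨Fintype.mem_piFinset.mpr fun j => hn.1 _, ?_⟩
        refine Finset.mem_filter.mpr ⟨hn.1 0, ?_⟩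
        have h := eval_eq_eval_mv_eval' (Fin.tail n) (n 0) p
        rw [Fin.cons_self_tail] at h
        rw [← hFdef] at h
        rw [← h]
        exact hn.2
      · intro a _ b _ hab
        have h1 : Fin.tail a = Fin.tail b := congrArg Sigma.fst hab
        have h2 : a 0 = b 0 := congrArg Sigma.snd hab
        rw [← Fin.cons_self_tail a, ← Fin.cons_self_tail b, h1, h2]
    have hbound : ∀ n' ∈ A, (S.filter fun y => (F.map (eval n')).eval y = 0).card
        ≤ if eval n' lc = 0 then S.card else d := by
      intro n' _
      split_ifs with h
      · exact Finset.card_le_card (Finset.filter_subset _ _)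
      · have hg : F.map (eval n') ≠ 0 := by
          intro hzero
          apply h
          have := Polynomial.coeff_map (eval n') d (p := F)
          rw [hzero, Polynomial.coeff_zero] at this
          exact this.symm
        calc (S.filter fun y => (F.map (eval n')).eval y = 0).card
            ≤ (F.map (eval n')).roots.toFinset.card := by
              apply Finset.card_le_card
              intro y hy
              rw [Finset.mem_filter] at hy
              rw [Multiset.mem_toFinset, Polynomial.mem_roots']
              exact ⟨hg, hy.2⟩
          _ ≤ Multiset.card (F.map (eval n')).roots := Multiset.toFinset_card_le _
          _ ≤ (F.map (eval n')).natDegree := Polynomial.card_roots' _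
          _ ≤ d := Polynomial.natDegree_map_le
    set badlc := A.filter fun n' => eval n' lc = 0 with hbadlc
    have hsum : ∑ n' ∈ A, (S.filter fun y => (F.map (eval n')).eval y = 0).card
        ≤ badlc.card * S.card + d * S.card ^ r := by
      calc ∑ n' ∈ A, (S.filter fun y => (F.map (eval n')).eval y = 0).card
          ≤ ∑ n' ∈ A, if eval n' lc = 0 then S.card else d := Finset.sum_le_sum hbound
        _ = badlc.card * S.card + (A.filter fun n' => ¬ eval n' lc = 0).card * d := by
            rw [Finset.sum_ite, Finset.sum_const, Finset.sum_const, smul_eq_mul, smul_eq_mul]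
        _ ≤ badlc.card * S.card + d * S.card ^ r := by
            apply Nat.add_le_add_left
            rw [mul_comm]
            apply Nat.mul_le_mul_left
            calc (A.filter fun n' => ¬ eval n' lc = 0).card ≤ A.card :=
                Finset.card_le_card (Finset.filter_subset _ _)
              _ = S.card ^ r := by rw [hA, Fintype.card_piFinset]; simp
    have hih := ih lc hlc S
    rw [← hbadlc] at hih
    calc bad.card * S.card ≤ (badlc.card * S.card + d * S.card ^ r) * S.card := by
          exact Nat.mul_le_mul_right _ (le_trans hcard hsum)
      _ = badlc.card * S.card * S.card + d * S.card ^ r * S.card := by ring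
      _ ≤ lc.totalDegree * S.card ^ r * S.card + d * S.card ^ r * S.card := by
          gcongr
      _ = (lc.totalDegree + d) * S.card ^ (r + 1) := by ring
      _ ≤ p.totalDegree * S.card ^ (r + 1) := by gcongr


variable {σ : Type*}

lemma totalDegree_map_ratCast (p : MvPolynomial σ ℤ) :
    (map (Int.castRingHom ℚ) p).totalDegree = p.totalDegree := by
  rw [totalDegree, totalDegree,
    support_map_of_injective p (f := Int.castRingHom ℚ) Int.cast_injective]

lemma denom_clear (g : MvPolynomial σ ℚ) :
    ∃ (m : ℤ) (b : MvPolynomial σ ℤ), m ≠ 0 ∧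
      map (Int.castRingHom ℚ) b = C (m : ℚ) * g := by
  letI : Algebra (MvPolynomial σ ℤ) (MvPolynomial σ ℚ) := algebraMvPolynomial
  obtain ⟨⟨b, t⟩, h⟩ := IsLocalization.surj ((nonZeroDivisors ℤ).map (C (σ := σ))) g
  obtain ⟨m, hm, ht⟩ := t.2
  refine ⟨m, b, nonZeroDivisors.ne_zero hm, ?_⟩
  have halg : (algebraMap (MvPolynomial σ ℤ) (MvPolynomial σ ℚ)) =
      map (algebraMap ℤ ℚ) := algebraMap_def
  rw [halg] at h
  have hh : (algebraMap ℤ ℚ) = Int.castRingHom ℚ := by ext n; simp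
  rw [hh] at h
  rw [← h, ← ht, map_C]
  rw [mul_comm]
  norm_num

lemma C_int_ne_zero {m : ℤ} (hm : m ≠ 0) : (C m : MvPolynomial σ ℤ) ≠ 0 := by
  intro h
  have h2 := congrArg (coeff 0) h
  rw [coeff_zero_C, coeff_zero] at h2
  exact hm h2

lemma dvd_of_map_dvd {π f : MvPolynomial σ ℤ} (hπ : Prime π) (hd : 0 < π.totalDegree)
    (h : map (Int.castRingHom ℚ) π ∣ map (Int.castRingHom ℚ) f) : π ∣ f := by
  obtain ⟨g, hg⟩ := h
  obtain ⟨m, b, hm, hb⟩ := denom_clear g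
  have hmap : map (Int.castRingHom ℚ) (C m * f) = map (Int.castRingHom ℚ) (π * b) := by
    rw [map_mul, map_mul, map_C, hb, hg]
    simp only [Int.coe_castRingHom]
    ring
  have heq : C m * f = π * b :=
    MvPolynomial.map_injective (Int.castRingHom ℚ) Int.cast_injective hmap
  have hdvd : π ∣ C m * f := ⟨b, heq⟩
  rcases hπ.2.2 _ _ hdvd with h1 | h2
  · exfalso
    have h3 := totalDegree_le_of_dvd h1 (C_int_ne_zero hm)
    rw [totalDegree_C] at h3
    omega
  · exact h2

lemma isUnit_of_totalDegree_eq_zero {q : MvPolynomial σ ℚ} (hq : q ≠ 0)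
    (h : q.totalDegree = 0) : IsUnit q := by
  classical
  have hC : q = C (coeff 0 q) := by
    ext μ
    rw [totalDegree_eq_zero_iff] at h
    by_cases hμ : μ ∈ q.support
    · have hμ0 : μ = 0 := Finsupp.ext fun x => h μ hμ x
      subst hμ0
      simp [coeff_C]
    · rw [notMem_support_iff] at hμ
      rw [hμ, coeff_C]
      by_cases h0 : μ = 0
      · subst h0; simp [hμ]
      · simp [Ne.symm h0]
  have hc0 : coeff 0 q ≠ 0 := fun h0 => hq (by rw [hC, h0, map_zero])
  rw [hC]
  exact (isUnit_iff_ne_zero.mpr hc0).map _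

lemma map_ratCast_ne_zero {π : MvPolynomial σ ℤ} (hπ : π ≠ 0) :
    map (Int.castRingHom ℚ) π ≠ 0 := fun h =>
  hπ (MvPolynomial.map_injective (Int.castRingHom ℚ) Int.cast_injective
    (by rw [h, map_zero]))

lemma prime_map_of_prime {π : MvPolynomial σ ℤ} (hπ : Prime π) (hd : 0 < π.totalDegree) :
    Prime (map (Int.castRingHom ℚ) π) := by
  refine ⟨map_ratCast_ne_zero hπ.ne_zero, ?_, ?_⟩
  · intro h
    have hdd := totalDegree_le_of_dvd (isUnit_iff_dvd_one.mp h) (one_ne_zero)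
    rw [totalDegree_map_ratCast, totalDegree_one] at hdd
    omega
  · intro a b hab
    obtain ⟨ma, xa, hma, hxa⟩ := denom_clear a
    obtain ⟨mb, xb, hmb, hxb⟩ := denom_clear b
    have hu : ∀ (m : ℤ), m ≠ 0 → IsUnit (C (m : ℚ) : MvPolynomial σ ℚ) := by
      intro m hm
      exact (isUnit_iff_ne_zero.mpr (by exact_mod_cast hm)).map _
    have hdvd2 : map (Int.castRingHom ℚ) π ∣ map (Int.castRingHom ℚ) (xa * xb) := by
      rw [map_mul, hxa, hxb]
      have he : (C (ma : ℚ) * a) * (C (mb : ℚ) * b) = (C (ma : ℚ) * C (mb : ℚ)) * (a * b) := by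
        ring
      rw [he]
      exact Dvd.dvd.mul_left hab _
    have hd2 := dvd_of_map_dvd hπ hd hdvd2
    rcases hπ.2.2 _ _ hd2 with h1 | h1
    · left
      have h2 : map (Int.castRingHom ℚ) π ∣ C (ma : ℚ) * a := hxa ▸ map_dvd _ h1
      exact ((hu ma hma).dvd_mul_left).mp h2
    · right
      have h2 : map (Int.castRingHom ℚ) π ∣ C (mb : ℚ) * b := hxb ▸ map_dvd _ h1
      exact ((hu mb hmb).dvd_mul_left).mp h2

/-- A positive-degree common divisor over ℚ yields a prime common divisor over ℤ. -/
lemma exists_prime_common_divisor {s r : ℕ} (P : Fin s → MvPolynomial (Fin r) ℤ)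
    (hP : ∀ i, P i ≠ 0) (D : MvPolynomial (Fin r) ℚ)
    (hD : ∀ i, D ∣ (P i).map (Int.castRingHom ℚ)) (hD0 : D.totalDegree ≠ 0) (hs : 0 < s) :
    ∃ π : MvPolynomial (Fin r) ℤ, Prime π ∧ 0 < π.totalDegree ∧ ∀ i, π ∣ P i := by
  classical
  have hDne : D ≠ 0 := by
    rintro rfl
    have h0 := zero_dvd_iff.mp (hD ⟨0, hs⟩)
    exact hP ⟨0, hs⟩ (MvPolynomial.map_injective (Int.castRingHom ℚ) Int.cast_injective
      (by rw [h0, map_zero]))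
  have hDnu : ¬ IsUnit D := by
    intro h
    apply hD0
    have hdd := totalDegree_le_of_dvd (isUnit_iff_dvd_one.mp h) (one_ne_zero)
    rw [totalDegree_one] at hdd
    omega
  obtain ⟨q, hqirr, hqD⟩ := WfDvdMonoid.exists_irreducible_factor hDnu hDne
  have hq : Prime q := UniqueFactorizationMonoid.irreducible_iff_prime.mp hqirr
  have hq0 : 0 < q.totalDegree := by
    rcases Nat.eq_zero_or_pos q.totalDegree with h | h
    · exact absurd (isUnit_of_totalDegree_eq_zero hq.ne_zero h) hq.not_unit
    · exact h
  obtain ⟨m, a, hm, ha⟩ := denom_clear q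
  have ha0 : a ≠ 0 := by
    rintro rfl
    rw [map_zero] at ha
    have hq0' : q = 0 := by
      rcases mul_eq_zero.mp ha.symm with h | h
      · exfalso
        have h2 := congrArg (coeff 0) h
        rw [coeff_zero_C, coeff_zero] at h2
        exact hm (by exact_mod_cast h2)
      · exact h
    exact hq.ne_zero hq0'
  obtain ⟨f, hfprime, hfa⟩ := UniqueFactorizationMonoid.exists_prime_factors a ha0
  have hqa : q ∣ map (Int.castRingHom ℚ) a := by
    rw [ha]; exact Dvd.dvd.mul_left dvd_rfl _
  have hqprod : q ∣ (f.map (map (Int.castRingHom ℚ))).prod := by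
    refine hqa.trans ?_
    have h2 := (hfa.map (MvPolynomial.map (Int.castRingHom ℚ)).toMonoidHom).symm.dvd
    refine h2.trans (dvd_of_eq ?_)
    exact map_multiset_prod _ _
  obtain ⟨qz, hqzmem, hqdvd⟩ := hq.exists_mem_multiset_dvd hqprod
  obtain ⟨π, hπf, rfl⟩ := Multiset.mem_map.mp hqzmem
  have hπ : Prime π := hfprime π hπf
  have hπ0 : 0 < π.totalDegree := by
    have h3 := totalDegree_le_of_dvd hqdvd (map_ratCast_ne_zero hπ.ne_zero)
    rw [totalDegree_map_ratCast] at h3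
    omega
  refine ⟨π, hπ, hπ0, fun i => ?_⟩
  have hassoc : Associated q (map (Int.castRingHom ℚ) π) :=
    hq.associated_of_dvd (prime_map_of_prime hπ hπ0) hqdvd
  exact dvd_of_map_dvd hπ hπ0 (hassoc.symm.dvd.trans (hqD.trans (hD i)))

end Stmt7Aux

/-- Coprimality criterion: if the proportion of points `n ∈ S^r` with
`d_n ≤ k` exceeds `(2k+1)ℓ / #S`, then the polynomials are coprime. -/
theorem stmt7 (s r : ℕ) (hs : 2 ≤ s) (hr : 1 ≤ r)
    (P : Fin s → MvPolynomial (Fin r) ℤ)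
    (hP : ∀ i, P i ≠ 0)
    (l : ℕ) (hl : l = Finset.univ.sup fun i => (P i).totalDegree)
    (S : Finset ℤ) (hS : S.Nonempty)
    (k : ℕ) (hk : 0 < k)
    (hbig : ((2 * k + 1) * l : ℝ) / (S.card : ℝ) <
      (Nat.card {n : Fin r → ℤ // (∀ j, n j ∈ S) ∧
          (Finset.univ.gcd fun i => eval n (P i)) ≤ (k : ℤ)} : ℝ) / (S.card : ℝ) ^ r) :
    ∀ D : MvPolynomial (Fin r) ℚ,
      (∀ i, D ∣ (P i).map (Int.castRingHom ℚ)) → D.totalDegree = 0 := by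
  intro D hD
  by_contra hD0
  obtain ⟨π, hπ, hπ0, hπdvd⟩ := Stmt7Aux.exists_prime_common_divisor P hP D hD hD0 (by omega)
  classical
  set i0 : Fin s := ⟨0, by omega⟩ with hi0
  obtain ⟨Q, hQ⟩ := hπdvd i0
  have hQ0 : Q ≠ 0 := by rintro rfl; rw [mul_zero] at hQ; exact hP i0 hQ
  have hπne : π ≠ 0 := hπ.ne_zero
  have hdegsum : π.totalDegree + Q.totalDegree ≤ l := by
    rw [← Stmt7Aux.totalDegree_mul_eq hπne hQ0, ← hQ, hl]
    exact Finset.le_sup (f := fun i => (P i).totalDegree) (Finset.mem_univ i0)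
  set A := Fintype.piFinset fun _ : Fin r => S with hA
  set bad := A.filter fun n => (Finset.univ.gcd fun i => eval n (P i)) ≤ (k : ℤ) with hbad
  have hNcard : Nat.card {n : Fin r → ℤ // (∀ j, n j ∈ S) ∧
      (Finset.univ.gcd fun i => eval n (P i)) ≤ (k : ℤ)} = bad.card := by
    rw [← Nat.card_eq_finsetCard bad]
    apply Nat.card_congr
    apply Equiv.subtypeEquivRight
    intro n
    rw [hbad, Finset.mem_filter, hA, Fintype.mem_piFinset]
  have hcover : bad ⊆ ((Finset.Icc (-(k : ℤ)) k).biUnion fun c =>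
      A.filter fun n => eval n (π - C c) = 0) ∪ (A.filter fun n => eval n Q = 0) := by
    intro n hn
    rw [hbad, Finset.mem_filter] at hn
    obtain ⟨hnA, hng⟩ := hn
    have hdvd : eval n π ∣ Finset.univ.gcd fun i => eval n (P i) := by
      apply Finset.dvd_gcd
      intro i _
      obtain ⟨Qi, hQi⟩ := hπdvd i
      rw [hQi, map_mul]
      exact dvd_mul_right _ _
    by_cases hg0 : (Finset.univ.gcd fun i => eval n (P i)) = 0
    · have h1 : eval n (P i0) = 0 := Finset.gcd_eq_zero_iff.mp hg0 i0 (Finset.mem_univ _)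
      rw [hQ, map_mul] at h1
      rcases mul_eq_zero.mp h1 with h2 | h2
      · apply Finset.mem_union_left
        apply Finset.mem_biUnion.mpr
        refine ⟨0, ?_, ?_⟩
        · rw [Finset.mem_Icc]
          constructor <;> [simp; exact_mod_cast Nat.zero_le k]
        · rw [Finset.mem_filter]
          exact ⟨hnA, by rw [map_sub, eval_C, h2]; simp⟩
      · exact Finset.mem_union_right _ (Finset.mem_filter.mpr ⟨hnA, h2⟩)
    · have hnn : 0 ≤ (Finset.univ.gcd fun i => eval n (P i)) := by
        rw [← Finset.normalize_gcd, ← Int.abs_eq_normalize]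
        exact abs_nonneg _
      have hpos : 0 < (Finset.univ.gcd fun i => eval n (P i)) :=
        lt_of_le_of_ne hnn (Ne.symm hg0)
      have habs : |eval n π| ≤ (Finset.univ.gcd fun i => eval n (P i)) :=
        Int.le_of_dvd hpos ((abs_dvd _ _).mpr hdvd)
      have hle : |eval n π| ≤ (k : ℤ) := le_trans habs hng
      apply Finset.mem_union_left
      apply Finset.mem_biUnion.mpr
      refine ⟨eval n π, ?_, ?_⟩
      · rw [Finset.mem_Icc]
        constructor
        · linarith [neg_abs_le (eval n π)]
        · linarith [le_abs_self (eval n π)]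
      · rw [Finset.mem_filter]
        exact ⟨hnA, by rw [map_sub, eval_C, sub_self]⟩
  have hsub : ∀ c : ℤ, (π - C c) ≠ 0 := by
    intro c h
    have h2 : π = C c := by rwa [sub_eq_zero] at h
    rw [h2, totalDegree_C] at hπ0
    exact absurd hπ0 (lt_irrefl 0)
  have hdegsub : ∀ c : ℤ, (π - C c).totalDegree ≤ π.totalDegree := by
    intro c
    calc (π - C c).totalDegree = (π + (- C c)).totalDegree := by rw [sub_eq_add_neg]
      _ ≤ max π.totalDegree (- C c).totalDegree := totalDegree_add _ _
      _ ≤ π.totalDegree := by rw [totalDegree_neg, totalDegree_C]; exact max_le le_rfl (Nat.zero_le _)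
  have hIcc : (Finset.Icc (-(k : ℤ)) k).card = 2 * k + 1 := by
    rw [Int.card_Icc,
      show ((k : ℤ) + 1 - -(k : ℤ)) = ((2 * k + 1 : ℕ) : ℤ) by push_cast; ring,
      Int.toNat_natCast]
  have hcount : bad.card * S.card ≤ (2 * k + 1) * l * S.card ^ r := by
    calc bad.card * S.card
        ≤ (((Finset.Icc (-(k : ℤ)) k).biUnion fun c =>
              A.filter fun n => eval n (π - C c) = 0).card
           + (A.filter fun n => eval n Q = 0).card) * S.card := by
          apply Nat.mul_le_mul_right
          exact le_trans (Finset.card_le_card hcover) (Finset.card_union_le _ _)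
      _ ≤ ((∑ c ∈ Finset.Icc (-(k : ℤ)) k,
              (A.filter fun n => eval n (π - C c) = 0).card)
           + (A.filter fun n => eval n Q = 0).card) * S.card := by
          apply Nat.mul_le_mul_right
          apply Nat.add_le_add_right
          exact Finset.card_biUnion_le
      _ = (∑ c ∈ Finset.Icc (-(k : ℤ)) k,
              (A.filter fun n => eval n (π - C c) = 0).card * S.card)
          + (A.filter fun n => eval n Q = 0).card * S.card := by
          rw [add_mul, Finset.sum_mul]
      _ ≤ (∑ _c ∈ Finset.Icc (-(k : ℤ)) k, π.totalDegree * S.card ^ r)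
          + Q.totalDegree * S.card ^ r := by
          apply Nat.add_le_add
          · apply Finset.sum_le_sum
            intro c _
            exact le_trans (Stmt7Aux.sz r _ (hsub c) S)
              (Nat.mul_le_mul_right _ (hdegsub c))
          · exact Stmt7Aux.sz r Q hQ0 S
      _ = ((2 * k + 1) * π.totalDegree + Q.totalDegree) * S.card ^ r := by
          rw [Finset.sum_const, hIcc, smul_eq_mul]; ring
      _ ≤ (2 * k + 1) * l * S.card ^ r := by
          apply Nat.mul_le_mul_right
          calc (2 * k + 1) * π.totalDegree + Q.totalDegree
              ≤ (2 * k + 1) * π.totalDegree + (2 * k + 1) * Q.totalDegree := by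
                apply Nat.add_le_add_left
                exact Nat.le_mul_of_pos_left _ (by positivity)
            _ = (2 * k + 1) * (π.totalDegree + Q.totalDegree) := by ring
            _ ≤ (2 * k + 1) * l := Nat.mul_le_mul_left _ hdegsum
  have hs0 : 0 < S.card := Finset.card_pos.mpr hS
  rw [hNcard] at hbig
  rw [div_lt_div_iff₀ (by positivity) (by positivity)] at hbig
  have hreal : (bad.card : ℝ) * (S.card : ℝ) ≤
      ((2 * (k : ℝ) + 1) * (l : ℝ)) * (S.card : ℝ) ^ r := by
    exact_mod_cast hcount
  linarith
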